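/- For any finite metric space (X, δ), the doubling dimension of X is at most 4 times its Karger–Ruhl expansion rate: d_dbl ≤ 4·d_KR. -/

import Mathlib

/-- For any finite metric space, the doubling dimension is at most four times
the Karger–Ruhl expansion rate: if `|B(x,2r)| ≤ 2^k |B(x,r)|` for all `x, r`,
then every ball of radius `2r` can be covered by at most `2^(4k)` balls of
radius `r`. -/
theorem stmt4
    {X : Type*} [MetricSpace X] [Fintype X] (kKR : ℝ) (hk : 0 ≤ kKR)
    (hKR : ∀ (x : X) (r : ℝ), 0 < r →
      (Nat.card ↥(Metric.closedBall x (2 * r)) : ℝ) ≤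
        (2 : ℝ) ^ kKR * (Nat.card ↥(Metric.closedBall x r) : ℝ)) :
    ∀ (x : X) (r : ℝ), 0 < r → ∃ F : Finset X,
      (F.card : ℝ) ≤ (2 : ℝ) ^ (4 * kKR) ∧
      Metric.closedBall x (2 * r) ⊆ ⋃ y ∈ F, Metric.closedBall y r := by
  classical
  intro x r hr
  set S : Set X := Metric.closedBall x (2 * r) with hS
  set P : Finset X → Prop := fun F => (↑F ⊆ S) ∧ (∀ a ∈ F, ∀ b ∈ F, a ≠ b → r < dist a b)
    with hP
  have hPempty : P ∅ := by simp only [hP]; exact ⟨by simp, by simp⟩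
  obtain ⟨F, hFmem, hFmax⟩ : ∃ m ∈ Finset.univ.filter P, ∀ x ∈ Finset.univ.filter P, ¬ m < x := by
    obtain ⟨m, hm⟩ := Finset.exists_maximal (s := Finset.univ.filter P)
      ⟨∅, Finset.mem_filter.mpr ⟨Finset.mem_univ _, hPempty⟩⟩
    exact ⟨m, hm.1, fun x hx hlt => hlt.not_ge (hm.2 hx hlt.le)⟩
  have hPF : P F := (Finset.mem_filter.mp hFmem).2
  refine ⟨F, ?_, ?_⟩
  · -- cardinality bound
    have hpos : (0:ℝ) < 2 ^ kKR := Real.rpow_pos_of_pos two_pos _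
    -- chain inequality
    have hchain : ∀ y : X,
        (Nat.card ↥(Metric.closedBall y (8 * r)) : ℝ) ≤
          (2:ℝ) ^ (4 * kKR) * (Nat.card ↥(Metric.closedBall y (r / 2)) : ℝ) := by
      intro y
      have h1 := hKR y (r / 2) (by linarith)
      have h2 := hKR y r hr
      have h3 := hKR y (2 * r) (by linarith)
      have h4 := hKR y (4 * r) (by linarith)
      rw [show (2:ℝ) * (r / 2) = r by ring] at h1
      rw [show (2:ℝ) * (2 * r) = 4 * r by ring] at h3
      rw [show (2:ℝ) * (4 * r) = 8 * r by ring] at h4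
      have key : (Nat.card ↥(Metric.closedBall y (8 * r)) : ℝ) ≤
          (2:ℝ)^kKR * ((2:ℝ)^kKR * ((2:ℝ)^kKR * ((2:ℝ)^kKR *
            (Nat.card ↥(Metric.closedBall y (r / 2)) : ℝ)))) := by
        calc (Nat.card ↥(Metric.closedBall y (8 * r)) : ℝ)
            ≤ (2:ℝ)^kKR * (Nat.card ↥(Metric.closedBall y (4 * r)) : ℝ) := h4
          _ ≤ (2:ℝ)^kKR * ((2:ℝ)^kKR * (Nat.card ↥(Metric.closedBall y (2 * r)) : ℝ)) := by
              gcongr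
          _ ≤ (2:ℝ)^kKR * ((2:ℝ)^kKR * ((2:ℝ)^kKR *
              (Nat.card ↥(Metric.closedBall y r) : ℝ))) := by gcongr
          _ ≤ _ := by gcongr
      have e : (2:ℝ) ^ (4 * kKR) = (2:ℝ)^kKR * ((2:ℝ)^kKR * ((2:ℝ)^kKR * (2:ℝ)^kKR)) := by
        rw [show (4:ℝ) * kKR = kKR + (kKR + (kKR + kKR)) by ring,
          Real.rpow_add two_pos, Real.rpow_add two_pos, Real.rpow_add two_pos]
      rw [e]
      linarith [key, mul_assoc ((2:ℝ)^kKR) ((2:ℝ)^kKR) 1]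
    -- finset version of small balls
    set g : X → Finset X := fun y => (Metric.closedBall y (r / 2)).toFinite.toFinset with hg
    have hgcard : ∀ y, (g y).card = Nat.card ↥(Metric.closedBall y (r / 2)) := by
      intro y
      rw [Nat.card_coe_set_eq, Set.ncard_eq_toFinset_card']
      simp only [hg, Set.toFinite_toFinset]
    have hdisj : ∀ a ∈ F, ∀ b ∈ F, a ≠ b → Disjoint (g a) (g b) := by
      intro a ha b hb hab
      rw [Finset.disjoint_left]
      intro z hza hzb
      simp only [hg, Set.Finite.mem_toFinset, Metric.mem_closedBall] at hza hzb
      have := hPF.2 a ha b hb hab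
      have : dist a b ≤ r := by
        calc dist a b ≤ dist a z + dist z b := dist_triangle a z b
          _ ≤ r / 2 + r / 2 := add_le_add (by rw [dist_comm]; exact hza) hzb
          _ = r := by ring
      linarith [hPF.2 a ha b hb hab]
    have hsub4 : ∀ y ∈ F, g y ⊆ (Metric.closedBall x (4 * r)).toFinite.toFinset := by
      intro y hy z hz
      simp only [hg, Set.Finite.mem_toFinset, Metric.mem_closedBall] at hz ⊢
      have hyS : y ∈ S := hPF.1 hy
      simp only [hS, Metric.mem_closedBall] at hyS
      calc dist z x ≤ dist z y + dist y x := dist_triangle z y x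
        _ ≤ r / 2 + 2 * r := by gcongr
        _ ≤ 4 * r := by linarith
    have hsum : ∑ y ∈ F, ((g y).card : ℝ) ≤
        (Nat.card ↥(Metric.closedBall x (4 * r)) : ℝ) := by
      rw [← Nat.cast_sum]
      have := Finset.card_biUnion hdisj
      rw [← this]
      have hle : (F.biUnion g).card ≤ (Metric.closedBall x (4 * r)).toFinite.toFinset.card :=
        Finset.card_le_card (by intro z hz; obtain ⟨y, hy, hzy⟩ := Finset.mem_biUnion.mp hz
                                exact hsub4 y hy hzy)
      have hc : (Metric.closedBall x (4 * r)).toFinite.toFinset.card =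
          Nat.card ↥(Metric.closedBall x (4 * r)) := by
        rw [Nat.card_coe_set_eq, Set.ncard_eq_toFinset_card']
        simp only [Set.toFinite_toFinset]
      exact_mod_cast hc ▸ hle
    have hxin : ∀ y ∈ F, (Nat.card ↥(Metric.closedBall x (4 * r)) : ℝ) ≤
        (Nat.card ↥(Metric.closedBall y (8 * r)) : ℝ) := by
      intro y hy
      have hyS : y ∈ S := hPF.1 hy
      simp only [hS, Metric.mem_closedBall] at hyS
      have hsub : Metric.closedBall x (4 * r) ⊆ Metric.closedBall y (8 * r) := by
        intro z hz
        simp only [Metric.mem_closedBall] at hz ⊢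
        calc dist z y ≤ dist z x + dist x y := dist_triangle z x y
          _ ≤ 4 * r + 2 * r := by rw [dist_comm x y]; gcongr
          _ ≤ 8 * r := by linarith
      have := Set.ncard_le_ncard hsub (Set.toFinite _)
      rw [Nat.card_coe_set_eq, Nat.card_coe_set_eq]
      exact_mod_cast this
    have hball1 : (1:ℝ) ≤ (Nat.card ↥(Metric.closedBall x (4 * r)) : ℝ) := by
      have hx : x ∈ Metric.closedBall x (4 * r) := by
        simp [Metric.mem_closedBall]; linarith
      have : 0 < Nat.card ↥(Metric.closedBall x (4 * r)) := by
        rw [Nat.card_coe_set_eq]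
        exact (Set.ncard_pos (Set.toFinite _)).mpr ⟨x, hx⟩
      exact_mod_cast this
    -- combine
    have main : (F.card : ℝ) * (Nat.card ↥(Metric.closedBall x (4 * r)) : ℝ) ≤
        (2:ℝ) ^ (4 * kKR) * (Nat.card ↥(Metric.closedBall x (4 * r)) : ℝ) := by
      calc (F.card : ℝ) * (Nat.card ↥(Metric.closedBall x (4 * r)) : ℝ)
          = ∑ _y ∈ F, (Nat.card ↥(Metric.closedBall x (4 * r)) : ℝ) := by
            rw [Finset.sum_const, nsmul_eq_mul]
        _ ≤ ∑ y ∈ F, (Nat.card ↥(Metric.closedBall y (8 * r)) : ℝ) :=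
            Finset.sum_le_sum hxin
        _ ≤ ∑ y ∈ F, (2:ℝ) ^ (4 * kKR) * (Nat.card ↥(Metric.closedBall y (r / 2)) : ℝ) :=
            Finset.sum_le_sum fun y _ => hchain y
        _ = (2:ℝ) ^ (4 * kKR) * ∑ y ∈ F, ((g y).card : ℝ) := by
            rw [Finset.mul_sum]; congr 1; ext y; rw [hgcard]
        _ ≤ _ := by
            have h2 : (0:ℝ) < 2 ^ (4 * kKR) := Real.rpow_pos_of_pos two_pos _
            exact mul_le_mul_of_nonneg_left hsum h2.le
    have hcpos : (0:ℝ) < (Nat.card ↥(Metric.closedBall x (4 * r)) : ℝ) := by linarith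
    exact le_of_mul_le_mul_right main hcpos
  · -- covering
    intro z hz
    by_contra hnc
    simp only [Set.mem_iUnion, Metric.mem_closedBall, not_exists] at hnc
    push_neg at hnc
    have hzF : z ∉ F := by
      intro h
      have := hnc z h
      simp at this
      linarith
    have hP' : P (insert z F) := by
      constructor
      · intro a ha
        simp only [Finset.coe_insert, Set.mem_insert_iff] at ha
        rcases ha with rfl | ha
        · exact hz
        · exact hPF.1 ha
      · intro a ha b hb hab
        simp only [Finset.mem_insert] at ha hb
        rcases ha with rfl | ha <;> rcases hb with rfl | hb
        · exact absurd rfl hab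
        · exact hnc b hb
        · rw [dist_comm]; exact hnc a ha
        · exact hPF.2 a ha b hb hab
    exact hFmax (insert z F) (Finset.mem_filter.mpr ⟨Finset.mem_univ _, hP'⟩)
      (Finset.ssubset_insert hzF)
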